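/- arXiv:2506.22386 — 2 statements merged into one kernel-verified Lean document; each statement's English description precedes it below -/
import Mathlib

section
/- Let V be a complex vector space, let v₁, v₂, v₃ ∈ V be linearly independent, write ξᵢ = ι(vᵢ) for their images in the exterior algebra Λ(V), and let c, ℓ ∈ ℂ. Then the triangle cocycle condition (1 + c·(ξ₁ − ξ₃) − ℓ·(ξ₁ ∧ ξ₃)) · (1 + c·(ξ₃ − ξ₂) − ℓ·(ξ₃ ∧ ξ₂)) = 1 + c·(ξ₁ − ξ₂) − ℓ·(ξ₁ ∧ ξ₂) holds in Λ(V) if and only if c² = ℓ. -/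
open ExteriorAlgebra

theorem aux_ι_mul_ι_ne_zero {V : Type*} [AddCommGroup V] [Module ℂ V] {x y : V}
    (h : LinearIndependent ℂ ![x, y]) : ι ℂ x * ι ℂ y ≠ 0 := by
  classical
  set b : Module.Basis (Fin 2) ℂ (Submodule.span ℂ (Set.range ![x, y])) := Module.Basis.span h
  obtain ⟨φ, hφ⟩ := LinearMap.exists_extend (b.coord 0)
  obtain ⟨ψ, hψ⟩ := LinearMap.exists_extend (b.coord 1)
  set g : V →ₗ[ℂ] (Fin 2 → ℂ) := LinearMap.pi ![φ, ψ]
  set F : V [⋀^Fin 2]→ₗ[ℂ] ℂ := ((Pi.basisFun ℂ (Fin 2)).det).compLinearMap g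
  have hb : ∀ i : Fin 2, (b i : V) = ![x, y] i := fun i => congrArg Subtype.val (Module.Basis.span_apply h i)
  have hφb : ∀ i, φ (b i : V) = if i = 0 then 1 else 0 := by
    intro i
    have := congrFun (congrArg (fun f => f.toFun) hφ) (b i)
    simp only [LinearMap.toFun_eq_coe, LinearMap.comp_apply, Submodule.subtype_apply] at this ⊢
    rw [show φ ((b i : V)) = (b.coord 0) (b i) from this, Module.Basis.coord_apply, b.repr_self]
    fin_cases i <;> simp
  have hψb : ∀ i, ψ (b i : V) = if i = 1 then 1 else 0 := by
    intro i
    have := congrFun (congrArg (fun f => f.toFun) hψ) (b i)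
    simp only [LinearMap.toFun_eq_coe, LinearMap.comp_apply, Submodule.subtype_apply] at this ⊢
    rw [show ψ ((b i : V)) = (b.coord 1) (b i) from this, Module.Basis.coord_apply, b.repr_self]
    fin_cases i <;> simp
  have hx0 : (b 0 : V) = x := by simpa using hb 0
  have hy1 : (b 1 : V) = y := by simpa using hb 1
  have hF : F ![x, y] = 1 := by
    have hφx : φ x = 1 := by rw [← hx0]; simpa using hφb 0
    have hφy : φ y = 0 := by rw [← hy1]; simpa using hφb 1
    have hψx : ψ x = 0 := by rw [← hx0]; simpa using hψb 0
    have hψy : ψ y = 1 := by rw [← hy1]; simpa using hψb 1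
    simp only [F, AlternatingMap.compLinearMap_apply]
    rw [Module.Basis.det_apply]
    rw [Matrix.det_fin_two]
    simp [g, Module.Basis.toMatrix_apply, Pi.basisFun_repr, Function.comp, hφx, hφy, hψx, hψy]
  intro hzero
  set f : ∀ i, V [⋀^Fin i]→ₗ[ℂ] ℂ :=
    Function.update (fun i => (0 : V [⋀^Fin i]→ₗ[ℂ] ℂ)) 2 F
  have hmulti : ιMulti ℂ 2 ![x, y] = ι ℂ x * ι ℂ y := by
    simp [ιMulti_apply, List.ofFn_succ]
  have := liftAlternating_apply_ιMulti f ![x, y]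
  rw [hmulti, hzero, map_zero] at this
  have hf2 : f 2 = F := Function.update_self _ _ _
  rw [hf2, hF] at this
  exact one_ne_zero this.symm

/-- The triangle cocycle condition in the exterior algebra holds iff c² = ℓ. -/
theorem triangle_cocycle_iff_sq (V : Type*) [AddCommGroup V] [Module ℂ V]
    (v₁ v₂ v₃ : V) (hli : LinearIndependent ℂ ![v₁, v₂, v₃]) (c ℓ : ℂ) :
    (1 + c • (ι ℂ v₁ - ι ℂ v₃) - ℓ • (ι ℂ v₁ * ι ℂ v₃)) *
        (1 + c • (ι ℂ v₃ - ι ℂ v₂) - ℓ • (ι ℂ v₃ * ι ℂ v₂)) =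
      1 + c • (ι ℂ v₁ - ι ℂ v₂) - ℓ • (ι ℂ v₁ * ι ℂ v₂) ↔ c ^ 2 = ℓ := by
  have hpair : LinearIndependent ℂ ![v₁ - v₂, v₃ - v₂] := by
    rw [LinearIndependent.pair_iff]
    intro s t hst
    have h3 := Fintype.linearIndependent_iff.mp hli ![s, -(s + t), t]
    have hsum : ∑ i, (![s, -(s + t), t] : Fin 3 → ℂ) i • (![v₁, v₂, v₃] : Fin 3 → V) i = 0 := by
      rw [Fin.sum_univ_three]
      simp only [Matrix.cons_val_zero, Matrix.cons_val_one, Matrix.head_cons,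
        Matrix.cons_val_two, Matrix.tail_cons]
      have : s • v₁ + -(s + t) • v₂ + t • v₃ = s • (v₁ - v₂) + t • (v₃ - v₂) := by module
      rw [this, hst]
    have h0 := h3 hsum 0
    have h2 := h3 hsum 2
    simp only [Matrix.cons_val_zero, Matrix.cons_val_two, Matrix.tail_cons,
      Matrix.head_cons] at h0 h2
    exact ⟨h0, h2⟩
  have hne := aux_ι_mul_ι_ne_zero hpair
  have hswap : ∀ x y : V, ι ℂ y * ι ℂ x = -(ι ℂ x * ι ℂ y) := fun x y =>
    eq_neg_of_add_eq_zero_right (by rw [add_comm]; exact ι_add_mul_swap _ _)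
  have hswap' : ∀ (x y : V) (z : ExteriorAlgebra ℂ V),
      ι ℂ y * (ι ℂ x * z) = -(ι ℂ x * (ι ℂ y * z)) := fun x y z => by
    rw [← mul_assoc, hswap, neg_mul, mul_assoc]
  have hz : ∀ (x : V) (z : ExteriorAlgebra ℂ V), ι ℂ x * (ι ℂ x * z) = 0 := fun x z => by
    rw [← mul_assoc, ι_sq_zero, zero_mul]
  have key : (1 + c • (ι ℂ v₁ - ι ℂ v₃) - ℓ • (ι ℂ v₁ * ι ℂ v₃)) *
        (1 + c • (ι ℂ v₃ - ι ℂ v₂) - ℓ • (ι ℂ v₃ * ι ℂ v₂)) =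
      (1 + c • (ι ℂ v₁ - ι ℂ v₂) - ℓ • (ι ℂ v₁ * ι ℂ v₂))
      + (c ^ 2 - ℓ) • (ι ℂ (v₁ - v₂) * ι ℂ (v₃ - v₂)) := by
    simp only [map_sub, smul_sub, sub_mul, mul_sub, add_mul, mul_add, smul_mul_assoc,
      mul_smul_comm, smul_smul, one_mul, mul_one, mul_assoc, ι_sq_zero, smul_zero, mul_zero,
      zero_mul, hswap v₂ v₃, hswap v₁ v₃, hswap v₁ v₂, hswap' v₂ v₃, hswap' v₁ v₃, hswap' v₁ v₂,
      hz, mul_neg, neg_mul, smul_neg, sub_smul, neg_zero]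
    module
  rw [key]
  constructor
  · intro h
    have h0 : (c ^ 2 - ℓ) • (ι ℂ (v₁ - v₂) * ι ℂ (v₃ - v₂)) = 0 := by
      have := add_eq_left.mp h
      exact this
    rcases smul_eq_zero.mp h0 with h1 | h1
    · exact sub_eq_zero.mp h1
    · exact absurd h1 hne
  · intro h
    rw [h, sub_self, zero_smul, add_zero]
end

section
/- Let V be a complex vector space, let v₁, v₂, v₃, v₄ ∈ V be linearly independent, write ξᵢ = ι(vᵢ) for their images in the exterior algebra Λ(V), let ℓ ∈ ℤ and c ∈ ℂ. Suppose that both of the following cocycle conditions hold in Λ(V): (1 + c·(ξ₁ − ξ₃) − ℓ·(ξ₁ ∧ ξ₃)) · (1 + c·(ξ₃ − ξ₂) − ℓ·(ξ₃ ∧ ξ₂)) = 1 + c·(ξ₁ − ξ₂) − ℓ·(ξ₁ ∧ ξ₂), and (1 + c·(ξ₄ − ξ₂) − ℓ·(ξ₄ ∧ ξ₂)) · (1 + c·(ξ₁ − ξ₄) − ℓ·(ξ₁ ∧ ξ₄)) = 1 + c·(ξ₁ − ξ₂) − ℓ·(ξ₁ ∧ ξ₂). Then ℓ = 0 and c = 0.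 -/
open ExteriorAlgebra

noncomputable section TwoTri

private def Xm : Matrix (Fin 4) (Fin 4) ℂ := !![0,0,0,0; 1,0,0,0; 0,0,0,0; 0,0,1,0]
private def Ym : Matrix (Fin 4) (Fin 4) ℂ := !![0,0,0,0; 0,0,0,0; 1,0,0,0; 0,-1,0,0]

private lemma hXX : Xm * Xm = 0 := by
  ext i j
  fin_cases i <;> fin_cases j <;>
    simp [Xm, Matrix.mul_apply, Fin.sum_univ_four, Matrix.vecHead, Matrix.vecTail]

private lemma hYY : Ym * Ym = 0 := by
  ext i j
  fin_cases i <;> fin_cases j <;>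
    simp [Ym, Matrix.mul_apply, Fin.sum_univ_four, Matrix.vecHead, Matrix.vecTail]

private lemma hYX : Ym * Xm = -(Xm * Ym) := by
  ext i j
  fin_cases i <;> fin_cases j <;>
    simp [Xm, Ym, Matrix.mul_apply, Fin.sum_univ_four, Matrix.vecHead, Matrix.vecTail]

end TwoTri

/-- Two adjacent triangle cocycle conditions force ℓ = 0 and c = 0. -/
theorem two_triangles_force_trivial (V : Type*) [AddCommGroup V] [Module ℂ V]
    (v₁ v₂ v₃ v₄ : V) (hli : LinearIndependent ℂ ![v₁, v₂, v₃, v₄])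
    (ℓ : ℤ) (c : ℂ)
    (h₁ : (1 + c • (ι ℂ v₁ - ι ℂ v₃) - (ℓ : ℂ) • (ι ℂ v₁ * ι ℂ v₃)) *
        (1 + c • (ι ℂ v₃ - ι ℂ v₂) - (ℓ : ℂ) • (ι ℂ v₃ * ι ℂ v₂)) =
        1 + c • (ι ℂ v₁ - ι ℂ v₂) - (ℓ : ℂ) • (ι ℂ v₁ * ι ℂ v₂))
    (h₂ : (1 + c • (ι ℂ v₄ - ι ℂ v₂) - (ℓ : ℂ) • (ι ℂ v₄ * ι ℂ v₂)) *
        (1 + c • (ι ℂ v₁ - ι ℂ v₄) - (ℓ : ℂ) • (ι ℂ v₁ * ι ℂ v₄)) =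
        1 + c • (ι ℂ v₁ - ι ℂ v₂) - (ℓ : ℂ) • (ι ℂ v₁ * ι ℂ v₂)) :
    ℓ = 0 ∧ c = 0 := by
  classical
  set w : Fin 4 → V := ![v₁, v₂, v₃, v₄] with hw
  have hinj : Function.Injective w := hli.injective
  have hs : LinearIndepOn ℂ id (Set.range w) := (linearIndepOn_id_range_iff hinj).2 hli
  set B := Module.Basis.extend hs with hBdef
  have hmem : ∀ i : Fin 4, w i ∈ hs.extend (Set.subset_univ _) :=
    fun i => hs.subset_extend _ ⟨i, rfl⟩
  set j : Fin 4 → hs.extend (Set.subset_univ _) := fun i => ⟨w i, hmem i⟩ with hj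
  have hB : ∀ i, B (j i) = w i := fun i => Module.Basis.extend_apply_self hs (j i)
  have hcoord : ∀ i k : Fin 4, B.coord (j i) (w k) = if i = k then 1 else 0 := by
    intro i k
    rw [← hB k, Module.Basis.coord_apply, B.repr_self, Finsupp.single_apply]
    by_cases h : i = k
    · simp [h]
    · have hne : j k ≠ j i := by
        intro he
        exact h (hinj (congrArg Subtype.val he)).symm
      simp [hne, h]
  set f : V →ₗ[ℂ] Matrix (Fin 4) (Fin 4) ℂ :=
    (B.coord (j 0)).smulRight Xm + (B.coord (j 1)).smulRight Ym with hfdef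
  have hfapp : ∀ m : V, f m = B.coord (j 0) m • Xm + B.coord (j 1) m • Ym := by
    intro m; simp [hfdef]
  have hf : ∀ m : V, f m * f m = 0 := by
    intro m
    rw [hfapp m]
    set a := B.coord (j 0) m
    set b := B.coord (j 1) m
    rw [add_mul, mul_add, mul_add, smul_mul_assoc, smul_mul_assoc, smul_mul_assoc,
      smul_mul_assoc, mul_smul_comm, mul_smul_comm, mul_smul_comm, mul_smul_comm,
      hXX, hYY, hYX, smul_zero, smul_zero, smul_zero, smul_zero, smul_neg, smul_neg,
      smul_smul, smul_smul, mul_comm b a]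
    abel
  set F : ExteriorAlgebra ℂ V →ₐ[ℂ] Matrix (Fin 4) (Fin 4) ℂ :=
    ExteriorAlgebra.lift ℂ ⟨f, hf⟩ with hFdef
  have hFι : ∀ m : V, F (ι ℂ m) = f m := fun m => ExteriorAlgebra.lift_ι_apply (R := ℂ) f hf m
  have hw0 : v₁ = w 0 := rfl
  have hw1 : v₂ = w 1 := rfl
  have hw2 : v₃ = w 2 := rfl
  have hw3 : v₄ = w 3 := rfl
  have hv1 : F (ι ℂ v₁) = Xm := by
    rw [hw0, hFι, hfapp, hcoord, hcoord]; simp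
  have hv2 : F (ι ℂ v₂) = Ym := by
    rw [hw1, hFι, hfapp, hcoord, hcoord]; simp
  have hv3 : F (ι ℂ v₃) = 0 := by
    rw [hw2, hFι, hfapp, hcoord, hcoord]; simp
  have hv4 : F (ι ℂ v₄) = 0 := by
    rw [hw3, hFι, hfapp, hcoord, hcoord]; simp
  have e1 := congrArg F h₁
  have e2 := congrArg F h₂
  simp only [map_mul, map_add, map_sub, map_one, map_smul, hv1, hv2, hv3, hv4,
    mul_zero, zero_mul, smul_zero, sub_zero, zero_sub, add_zero] at e1 e2
  have p1 := congrFun (congrFun e1 3) 0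
  have p2 := congrFun (congrFun e2 3) 0
  simp [Xm, Ym, Matrix.mul_apply, Fin.sum_univ_four, Matrix.one_apply,
    Matrix.vecHead, Matrix.vecTail, Matrix.add_apply, Matrix.sub_apply,
    Matrix.smul_apply, Matrix.neg_apply] at p1 p2
  have hc : c = 0 := by
    have h2c : c * c + c * c = 0 := by
      linear_combination p1 + p2
    have : c * c = 0 := by linear_combination h2c / 2
    exact mul_self_eq_zero.mp this
  refine ⟨?_, hc⟩
  have hl : (ℓ : ℂ) = 0 := by
    rw [hc] at p1; simpa using p1.symm
  exact_mod_cast hl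
end
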